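/- Let G_κ(t,x) = (1/2)·1_{|x| ≤ κt} for t ≥ 0 (0 for t < 0). For any T > 0 and all (t,x), (t',x') ∈ (0,T] × ℝ, ∫₀^∞ ∫_ℝ (G_κ(t−s, x−y) − G_κ(t'−s, x'−y))² dy ds ≤ C_T (|x'−x| + |t'−t|), where C_T = (max(κ,1)) T / 2. -/

import Mathlib

open Real MeasureTheory

/-- Wave kernel `G_κ(t,x) = (1/2)·1_{|x| ≤ κt}` for `t ≥ 0`, and `0` for `t < 0`. -/
noncomputable def waveKernel (κ t x : ℝ) : ℝ :=
  if 0 ≤ t ∧ |x| ≤ κ * t then 1 / 2 else 0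

/-- `T_κ(t,x) = (t − |x|/(2κ))·1_{|x| ≤ 2κt}`. -/
noncomputable def Tker (κ t x : ℝ) : ℝ :=
  if |x| ≤ 2 * κ * t then t - |x| / (2 * κ) else 0

/-- Length of the interval `[a,b]` (0 if degenerate). -/
noncomputable def Vol (a b : ℝ) : ℝ := max (b - a) 0

lemma vol_Icc_toReal (a b : ℝ) : (volume (Set.Icc a b)).toReal = Vol a b := by
  rw [Real.volume_Icc, ENNReal.toReal_ofReal']; rfl

lemma V_ineq (a₁ b₁ a₂ b₂ : ℝ) :
    Vol a₁ b₁ + Vol a₂ b₂ - 2 * Vol (max a₁ a₂) (min b₁ b₂)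
      ≤ |a₁ - a₂| + |b₁ - b₂| := by
  unfold Vol
  rcases max_cases (b₁ - a₁) 0 with ⟨e1, i1⟩ | ⟨e1, i1⟩ <;>
  rcases max_cases (b₂ - a₂) 0 with ⟨e2, i2⟩ | ⟨e2, i2⟩ <;>
  rcases max_cases (min b₁ b₂ - max a₁ a₂) 0 with ⟨e3, i3⟩ | ⟨e3, i3⟩ <;>
  rcases abs_cases (a₁ - a₂) with ⟨f1, j1⟩ | ⟨f1, j1⟩ <;>
  rcases abs_cases (b₁ - b₂) with ⟨f2, j2⟩ | ⟨f2, j2⟩ <;>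
  rcases max_cases a₁ a₂ with ⟨g1, k1⟩ | ⟨g1, k1⟩ <;>
  rcases min_cases b₁ b₂ with ⟨g2, k2⟩ | ⟨g2, k2⟩ <;>
  simp only [g1, g2] at e3 i3 ⊢ <;>
  simp only [e1, e2, e3, f1, f2] <;>
  linarith

lemma waveKernel_indicator (κ : ℝ) (hκ : 0 < κ) (u x y : ℝ) :
    waveKernel κ u (x - y) =
      Set.indicator (Set.Icc (x - κ * u) (x + κ * u)) (fun _ => (1:ℝ)/2) y := by
  unfold waveKernel
  rw [Set.indicator_apply]
  congr 1
  simp only [Set.mem_Icc, eq_iff_iff]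
  constructor
  · rintro ⟨-, h⟩
    rw [abs_le] at h
    exact ⟨by linarith [h.2], by linarith [h.1]⟩
  · rintro ⟨h1, h2⟩
    have hk : 0 ≤ κ * u := le_trans (abs_nonneg (x - y)) (abs_le.mpr ⟨by linarith, by linarith⟩)
    exact ⟨(mul_nonneg_iff_of_pos_left hκ).mp hk, abs_le.mpr ⟨by linarith, by linarith⟩⟩

lemma indicator_integrable (a b : ℝ) (c : ℝ) :
    Integrable ((Set.Icc a b).indicator (fun _ => c)) volume := by
  rw [integrable_indicator_iff measurableSet_Icc]
  exact integrableOn_const measure_Icc_lt_top.ne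

lemma inner_integral_eq (κ : ℝ) (hκ : 0 < κ) (u u' x x' : ℝ) :
    ∫ y : ℝ, (waveKernel κ u (x - y) - waveKernel κ u' (x' - y)) ^ 2
      = (1/4) * (Vol (x - κ*u) (x + κ*u) + Vol (x' - κ*u') (x' + κ*u')
          - 2 * Vol (max (x - κ*u) (x' - κ*u')) (min (x + κ*u) (x' + κ*u'))) := by
  set a₁ := x - κ*u with ha₁
  set b₁ := x + κ*u with hb₁
  set a₂ := x' - κ*u' with ha₂
  set b₂ := x' + κ*u' with hb₂
  have h1 : ∀ y : ℝ, (waveKernel κ u (x - y) - waveKernel κ u' (x' - y)) ^ 2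
      = (1/4) * ((Set.Icc a₁ b₁).indicator (fun _ => (1:ℝ)) y
        + (Set.Icc a₂ b₂).indicator (fun _ => (1:ℝ)) y
        - 2 * ((Set.Icc a₁ b₁ ∩ Set.Icc a₂ b₂).indicator (fun _ => (1:ℝ)) y)) := by
    intro y
    rw [waveKernel_indicator κ hκ u x y, waveKernel_indicator κ hκ u' x' y, ← ha₁, ← hb₁, ← ha₂, ← hb₂]
    by_cases hA : y ∈ Set.Icc a₁ b₁ <;> by_cases hB : y ∈ Set.Icc a₂ b₂ <;>
      simp [Set.indicator_apply, hA, hB, Set.mem_inter_iff] <;> norm_num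
  simp only [h1]
  rw [integral_const_mul]
  have iA := indicator_integrable a₁ b₁ (1:ℝ)
  have iB := indicator_integrable a₂ b₂ (1:ℝ)
  have iC : Integrable ((Set.Icc a₁ b₁ ∩ Set.Icc a₂ b₂).indicator (fun _ => (1:ℝ))) volume := by
    rw [Set.Icc_inter_Icc]; exact indicator_integrable _ _ _
  have iAB : Integrable (fun y : ℝ => (Set.Icc a₁ b₁).indicator (fun _ => (1:ℝ)) y
      + (Set.Icc a₂ b₂).indicator (fun _ => (1:ℝ)) y) volume := iA.add iB
  have iC2 : Integrable (fun y : ℝ =>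
      2 * (Set.Icc a₁ b₁ ∩ Set.Icc a₂ b₂).indicator (fun _ => (1:ℝ)) y) volume := iC.const_mul 2
  rw [integral_sub iAB iC2, integral_add iA iB, integral_const_mul, Set.Icc_inter_Icc]
  rw [integral_indicator_const _ measurableSet_Icc, integral_indicator_const _ measurableSet_Icc,
    integral_indicator_const _ measurableSet_Icc]
  simp only [smul_eq_mul, mul_one, measureReal_def, vol_Icc_toReal]

lemma Vol_nonpos (a b : ℝ) (h : b - a ≤ 0) : Vol a b = 0 := max_eq_right h

theorem waveKernel_increment_bound (κ T : ℝ) (hκ : 0 < κ) (hT : 0 < T)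
    (t t' x x' : ℝ) (ht : t ∈ Set.Ioc 0 T) (ht' : t' ∈ Set.Ioc 0 T) :
    ∫ s in Set.Ioi (0:ℝ), ∫ y : ℝ,
        (waveKernel κ (t - s) (x - y) - waveKernel κ (t' - s) (x' - y)) ^ 2
      ≤ (max κ 1) * T / 2 * (|x' - x| + |t' - t|) := by
  set φ : ℝ → ℝ := fun s =>
    (1/4) * (Vol (x - κ*(t-s)) (x + κ*(t-s)) + Vol (x' - κ*(t'-s)) (x' + κ*(t'-s))
      - 2 * Vol (max (x - κ*(t-s)) (x' - κ*(t'-s))) (min (x + κ*(t-s)) (x' + κ*(t'-s)))) with hφ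
  have hcont : Continuous φ := by
    simp only [hφ, Vol]
    fun_prop
  set m := max t t' with hm
  have hm0 : (0:ℝ) ≤ m := le_trans ht.1.le (le_max_left t t')
  have hmT : m ≤ T := max_le ht.2 ht'.2
  set M := max κ 1 / 2 * (|x' - x| + |t' - t|) with hM
  have hM0 : 0 ≤ M := by
    apply mul_nonneg
    · positivity
    · positivity
  -- φ vanishes beyond m
  have hzero : ∀ s ∈ Set.Ioi m, φ s = 0 := by
    intro s hs
    have hst : t - s ≤ 0 := by simp only [Set.mem_Ioi, hm] at hs; linarith [le_max_left t t']
    have hst' : t' - s ≤ 0 := by simp only [Set.mem_Ioi, hm] at hs; linarith [le_max_right t t']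
    have h1 : Vol (x - κ*(t-s)) (x + κ*(t-s)) = 0 := Vol_nonpos _ _ (by nlinarith)
    have h2 : Vol (x' - κ*(t'-s)) (x' + κ*(t'-s)) = 0 := Vol_nonpos _ _ (by nlinarith)
    have h3 : Vol (max (x - κ*(t-s)) (x' - κ*(t'-s))) (min (x + κ*(t-s)) (x' + κ*(t'-s))) = 0 := by
      apply Vol_nonpos
      have := min_le_left (x + κ*(t-s)) (x' + κ*(t'-s))
      have := le_max_left (x - κ*(t-s)) (x' - κ*(t'-s))
      nlinarith
    simp only [hφ, h1, h2, h3]; ring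
  -- φ is bounded by M
  have hbound : ∀ s : ℝ, φ s ≤ M := by
    intro s
    have key := V_ineq (x - κ*(t-s)) (x + κ*(t-s)) (x' - κ*(t'-s)) (x' + κ*(t'-s))
    have e1 : |x - κ*(t-s) - (x' - κ*(t'-s))| ≤ |x' - x| + κ * |t' - t| := by
      have : x - κ*(t-s) - (x' - κ*(t'-s)) = -(x' - x) + κ * (t' - t) := by ring
      rw [this]
      calc |-(x' - x) + κ * (t' - t)| ≤ |-(x' - x)| + |κ * (t' - t)| := abs_add_le _ _
        _ = |x' - x| + κ * |t' - t| := by rw [abs_neg, abs_mul, abs_of_pos hκ]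
    have e2 : |x + κ*(t-s) - (x' + κ*(t'-s))| ≤ |x' - x| + κ * |t' - t| := by
      have : x + κ*(t-s) - (x' + κ*(t'-s)) = -(x' - x) + -(κ * (t' - t)) := by ring
      rw [this]
      calc |-(x' - x) + -(κ * (t' - t))| ≤ |-(x' - x)| + |-(κ * (t' - t))| := abs_add_le _ _
        _ = |x' - x| + κ * |t' - t| := by rw [abs_neg, abs_neg, abs_mul, abs_of_pos hκ]
    have hκm : κ ≤ max κ 1 := le_max_left κ 1
    have h1m : (1:ℝ) ≤ max κ 1 := le_max_right κ 1
    have hxx : 0 ≤ |x' - x| := abs_nonneg _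
    have htt : 0 ≤ |t' - t| := abs_nonneg _
    simp only [hφ, hM]
    nlinarith [key]
  -- rewrite the double integral as the integral of φ
  have hrw : ∫ s in Set.Ioi (0:ℝ), ∫ y : ℝ,
        (waveKernel κ (t - s) (x - y) - waveKernel κ (t' - s) (x' - y)) ^ 2
      = ∫ s in Set.Ioi (0:ℝ), φ s := by
    apply setIntegral_congr_fun measurableSet_Ioi
    intro s _
    exact inner_integral_eq κ hκ (t - s) (t' - s) x x'
  rw [hrw]
  have hunion : Set.Ioc (0:ℝ) m ∪ Set.Ioi m = Set.Ioi 0 := Set.Ioc_union_Ioi_eq_Ioi hm0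
  have hint1 : IntegrableOn φ (Set.Ioc 0 m) volume := hcont.integrableOn_Ioc
  have hint2 : IntegrableOn φ (Set.Ioi m) volume := by
    apply (integrableOn_congr_fun hzero measurableSet_Ioi).mpr
    exact integrableOn_zero
  rw [← hunion, setIntegral_union (Set.Ioc_disjoint_Ioi le_rfl) measurableSet_Ioi hint1 hint2]
  have hZ : ∫ s in Set.Ioi m, φ s = 0 := by
    rw [setIntegral_congr_fun measurableSet_Ioi hzero]
    simp
  rw [hZ, add_zero]
  calc ∫ s in Set.Ioc (0:ℝ) m, φ s
      ≤ ∫ _ in Set.Ioc (0:ℝ) m, M := by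
        apply setIntegral_mono_on hint1 (integrableOn_const measure_Ioc_lt_top.ne)
          measurableSet_Ioc
        intro s _
        exact hbound s
    _ = (volume (Set.Ioc (0:ℝ) m)).toReal • M := setIntegral_const M
    _ = m * M := by rw [Real.volume_Ioc, ENNReal.toReal_ofReal (by linarith), smul_eq_mul]; ring_nf
    _ ≤ T * M := mul_le_mul_of_nonneg_right hmT hM0
    _ = max κ 1 * T / 2 * (|x' - x| + |t' - t|) := by rw [hM]; ring
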